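/- Let Σ be a finite alphabet with |Σ| = σ ≥ 2 and let w be a word over Σ with alph(w) = Σ and |w| = ι(w)·σ. Then for all s ∈ [σ] and all j ∈ [|w|], if nextAlphPos_w(j, s) ≠ −1 then nextAlphPos_w(j, s) ≤ ⌊j/σ⌋·σ + σ + s. -/

import Mathlib

open List

universe u
variable {α : Type u}

/-- `ScatFact k w` is the set of scattered factors (subsequences) of `w` of length exactly `k`. -/
def ScatFact (k : ℕ) (w : List α) : Set (List α) :=
  {v | v.length = k ∧ v.Sublist w}

/-- `w` is `k`-universal over the alphabet `S`: every word of length `k` over `S`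
is a scattered factor of `w`. -/
def IsKUniversal [DecidableEq α] (S : Finset α) (k : ℕ) (w : List α) : Prop :=
  ∀ v : List α, v.length = k → (∀ x ∈ v, x ∈ S) → v.Sublist w

/-- The universality index of `w` over the alphabet `S`: the largest `k` such that
`w` is `k`-universal over `S`. -/
noncomputable def univIdx [DecidableEq α] (S : Finset α) (w : List α) : ℕ :=
  sSup {k | IsKUniversal S k w}

/-- `IsArchFact S w inners modus rest` says that `w` has the arch factorization
`w = ar_1 ⋯ ar_n · rest` over the alphabet `S`, where the `i`-th arch is
`ar_i = inners[i] ++ [modus[i]]`: each arch contains every letter of `S`,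
the last letter of each arch occurs only once within the arch, and the
alphabet of the rest is a proper subset of `S`. -/
def IsArchFact [DecidableEq α] (S : Finset α) (w : List α)
    (inners : List (List α)) (modus : List α) (rest : List α) : Prop :=
  inners.length = modus.length ∧
  w = (List.zipWith (fun inn m => inn ++ [m]) inners modus).flatten ++ rest ∧
  (∀ p ∈ List.zip inners modus, ∀ x ∈ S, x ∈ p.1 ++ [p.2]) ∧
  (∀ p ∈ List.zip inners modus, p.2 ∉ p.1) ∧
  rest.toFinset ⊂ S

/-- `v` is perfect `k`-universal over `S`: `alph(v) = S`, the universality index of `v`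
over `S` is `k`, and the rest of its arch factorization over `S` is empty. -/
def IsPerfectUniv [DecidableEq α] (S : Finset α) (k : ℕ) (v : List α) : Prop :=
  v.toFinset = S ∧ univIdx S v = k ∧ ∃ inners modus, IsArchFact S v inners modus []

/-- `v` is minimal perfect `k`-universal over `S`. -/
def IsMinPerfectUniv [DecidableEq α] (S : Finset α) (k : ℕ) (v : List α) : Prop :=
  IsPerfectUniv S k v ∧ ∀ v' : List α, IsPerfectUniv S k v' → v.length ≤ v'.length

/-- `nextAlphPos w i s` (positions `1`-indexed): the least position `j` such that
`w[i+1..j]` contains exactly `s` distinct letters, or `none` (representing `-1`)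
if `w[i+1..|w|]` contains fewer than `s` distinct letters. -/
noncomputable def nextAlphPos [DecidableEq α] (w : List α) (i s : ℕ) : Option ℕ :=
  if (w.drop i).toFinset.card < s then none
  else some (sInf {j | ((w.drop i).take (j - i)).toFinset.card = s})

/-- The letter of `w` at (1-indexed) position `j`. -/
def letterAt [Inhabited α] (w : List α) (j : ℕ) : α := w.getD (j - 1) default

/-- The word over `Fin σ` with `ι` arches, whose first arch is `a_1 a_2 ⋯ a_σ`
and each later arch is the reverse of the previous one. -/
def wmin (σ ι : ℕ) : List (Fin σ) :=
  ((List.range ι).map (fun i =>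
    if i % 2 = 0 then List.finRange σ else (List.finRange σ).reverse)).flatten

section Aux

variable {α : Type u} [DecidableEq α]

/-- If `a :: v` is a sublist of `w` and `a` does not occur in the first `n`
letters of `w`, then `v` is a sublist of `w.drop (n+1)`. -/
lemma my_cons_sublist_drop {a : α} {v : List α} :
    ∀ (w : List α) (n : ℕ), a :: v <+ w → a ∉ w.take n → v <+ w.drop (n + 1) := by
  intro w
  induction w with
  | nil => intro n h _; exact absurd h (by simp)
  | cons b w' ih =>
    intro n h hn
    cases h with
    | cons _ h' =>
      cases n with
      | zero =>
        simpa using ((List.sublist_cons_self a v).trans h')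
      | succ m =>
        have hn' : a ∉ w'.take m := by
          intro hm; exact hn (by simp [List.mem_cons, hm])
        simpa using ih m h' hn'
    | cons_cons _ h' =>
      cases n with
      | zero => simpa using h'
      | succ m => exact absurd (by simp) hn

variable [Fintype α]

lemma my_mem_of_kuniv {k : ℕ} {w : List α} (hk : 1 ≤ k)
    (h : IsKUniversal Finset.univ k w) : ∀ a : α, a ∈ w := by
  intro a
  have hs : List.replicate k a <+ w :=
    h _ List.length_replicate (fun x _ => Finset.mem_univ x)
  exact hs.subset (List.mem_replicate.mpr ⟨by omega, rfl⟩)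

/-- One greedy step: peel off the first arch. -/
lemma my_step {k : ℕ} {w : List α} (hσ : 1 ≤ Fintype.card α)
    (h : IsKUniversal Finset.univ (k + 1) w) :
    ∃ p, Fintype.card α ≤ p ∧ p ≤ w.length ∧
      (w.take p).toFinset = (Finset.univ : Finset α) ∧
      IsKUniversal Finset.univ k (w.drop p) := by
  set A : Set ℕ := {t | (w.take t).toFinset = (Finset.univ : Finset α)} with hA
  have hlenA : w.length ∈ A := by
    have : w.toFinset = Finset.univ := by
      rw [Finset.eq_univ_iff_forall]
      intro a
      exact List.mem_toFinset.mpr (my_mem_of_kuniv (by omega) h a)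
    simp [hA, List.take_length, this]
  have hne : A.Nonempty := ⟨w.length, hlenA⟩
  set p := sInf A with hp
  have hpA : p ∈ A := Nat.sInf_mem hne
  have hple : p ≤ w.length := Nat.sInf_le hlenA
  have hσp : Fintype.card α ≤ p := by
    have h1 : Fintype.card α = (w.take p).toFinset.card := by
      rw [hpA]; simp [Finset.card_univ]
    have h2 : (w.take p).toFinset.card ≤ (w.take p).length := List.toFinset_card_le _
    have h3 : (w.take p).length ≤ p := by simp [List.length_take]
    omega
  refine ⟨p, hσp, hple, hpA, ?_⟩
  intro v hv _
  have hp1 : 1 ≤ p := by omega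
  have hnotA : p - 1 ∉ A := Nat.notMem_of_lt_sInf (by omega)
  have : ∃ a : α, a ∉ w.take (p - 1) := by
    by_contra hc
    push_neg at hc
    exact hnotA (by
      rw [hA, Set.mem_setOf_eq, Finset.eq_univ_iff_forall]
      intro a; exact List.mem_toFinset.mpr (hc a))
  obtain ⟨a, ha⟩ := this
  have hsub : a :: v <+ w := h (a :: v) (by simp [hv]) (fun x _ => Finset.mem_univ x)
  have := my_cons_sublist_drop w (p - 1) hsub ha
  rwa [show p - 1 + 1 = p by omega] at this

lemma my_len_ge (hσ : 1 ≤ Fintype.card α) :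
    ∀ (k : ℕ) (w : List α), IsKUniversal Finset.univ k w →
      k * Fintype.card α ≤ w.length := by
  intro k
  induction k with
  | zero => intro w _; simp
  | succ k ih =>
    intro w h
    obtain ⟨p, hσp, hple, _, hnext⟩ := my_step hσ h
    have := ih (w.drop p) hnext
    rw [List.length_drop] at this
    have hkk : (k + 1) * Fintype.card α = k * Fintype.card α + Fintype.card α := by ring
    omega

/-- Every length-σ block of a k-universal word of length `k·σ` is rainbow. -/
lemma my_blocks (hσ : 1 ≤ Fintype.card α) :
    ∀ (k : ℕ) (w : List α), IsKUniversal Finset.univ k w →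
      w.length = k * Fintype.card α →
      ∀ i < k, ((w.drop (i * Fintype.card α)).take (Fintype.card α)).toFinset
        = (Finset.univ : Finset α) := by
  intro k
  induction k with
  | zero => intro w _ _ i hi; omega
  | succ k ih =>
    intro w h hlen i hi
    obtain ⟨p, hσp, hple, hpA, hnext⟩ := my_step hσ h
    have hrest : k * Fintype.card α ≤ w.length - p := by
      have := my_len_ge hσ k (w.drop p) hnext
      rwa [List.length_drop] at this
    have hpeq : p = Fintype.card α := by
      have hkk : (k + 1) * Fintype.card α = k * Fintype.card α + Fintype.card α := by ring
      omega
    cases i with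
    | zero => simpa [← hpeq] using hpA
    | succ i' =>
      have hlen' : (w.drop p).length = k * Fintype.card α := by
        rw [List.length_drop]
        have hkk : (k + 1) * Fintype.card α = k * Fintype.card α + Fintype.card α := by ring
        omega
      have := ih (w.drop p) hnext hlen' i' (by omega)
      rw [List.drop_drop] at this
      rw [show (i' + 1) * Fintype.card α = p + i' * Fintype.card α by rw [hpeq]; ring]
      exact this

end Aux

theorem stmt15 {α : Type u} [Fintype α] [DecidableEq α]
    (hsigma : 2 ≤ Fintype.card α) (w : List α) (halph : ∀ a : α, a ∈ w)
    (hlen : w.length = univIdx Finset.univ w * Fintype.card α)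
    (s j : ℕ) (hs1 : 1 ≤ s) (hs2 : s ≤ Fintype.card α)
    (hj1 : 1 ≤ j) (hj2 : j ≤ w.length) :
    ∀ x : ℕ, nextAlphPos w j s = some x →
      x ≤ j / Fintype.card α * Fintype.card α + Fintype.card α + s := by
  intro x hx
  set σ := Fintype.card α with hσdef
  have hσ1 : 1 ≤ σ := by omega
  set k := univIdx Finset.univ w with hk
  -- the universality index is attained
  have hK : IsKUniversal Finset.univ k w := by
    have h0 : (0 : ℕ) ∈ {k | IsKUniversal Finset.univ k w} := by
      intro v hv _
      rw [List.length_eq_zero_iff] at hv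
      simp [hv]
    have hbdd : BddAbove {k | IsKUniversal Finset.univ k w} := by
      refine ⟨w.length, fun m hm => ?_⟩
      obtain ⟨a⟩ : Nonempty α := Fintype.card_pos_iff.mp (by omega)
      have := (hm (List.replicate m a) List.length_replicate
        (fun x _ => Finset.mem_univ x)).length_le
      simpa using this
    exact Nat.sSup_mem ⟨0, h0⟩ hbdd
  -- unfold nextAlphPos
  rw [nextAlphPos] at hx
  split_ifs at hx with hcard
  push_neg at hcard
  have hxval : x = sInf {j' | ((w.drop j).take (j' - j)).toFinset.card = s} :=
    (Option.some_injective ℕ hx.symm)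
  set d := w.drop j with hd
  -- minimal prefix of d with ≥ s letters
  set T : Set ℕ := {t | s ≤ (d.take t).toFinset.card} with hT
  have hTlen : d.length ∈ T := by simp [hT, List.take_length, hcard]
  set t₀ := sInf T with ht₀def
  have ht₀ : t₀ ∈ T := Nat.sInf_mem ⟨d.length, hTlen⟩
  have ht₀len : t₀ ≤ d.length := Nat.sInf_le hTlen
  have ht₀pos : 1 ≤ t₀ := by
    rcases Nat.eq_zero_or_pos t₀ with h0 | h
    · rw [h0] at ht₀; simp [hT] at ht₀; omega
    · omega
  have hprev : (d.take (t₀ - 1)).toFinset.card < s := by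
    have := Nat.notMem_of_lt_sInf (show t₀ - 1 < sInf T by omega)
    simp only [hT, Set.mem_setOf_eq, not_le] at this
    exact this
  have hstepc : (d.take t₀).toFinset.card ≤ (d.take (t₀ - 1)).toFinset.card + 1 := by
    have heq : d.take t₀ = d.take (t₀ - 1) ++ (d[t₀ - 1]?).toList := by
      rw [← List.take_succ, show t₀ - 1 + 1 = t₀ by omega]
    rw [heq, List.toFinset_append]
    have h1 : ((d[t₀ - 1]?).toList).toFinset.card ≤ 1 := by
      rcases d[t₀ - 1]? with _ | a <;> simp
    calc ((d.take (t₀ - 1)).toFinset ∪ ((d[t₀ - 1]?).toList).toFinset).card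
        ≤ (d.take (t₀ - 1)).toFinset.card + ((d[t₀ - 1]?).toList).toFinset.card :=
          Finset.card_union_le _ _
      _ ≤ (d.take (t₀ - 1)).toFinset.card + 1 := by omega
  have ht₀exact : (d.take t₀).toFinset.card = s := by
    have : s ≤ (d.take t₀).toFinset.card := ht₀
    omega
  -- so x ≤ j + t₀
  have hxle : x ≤ j + t₀ := by
    rw [hxval]
    apply Nat.sInf_le
    simp only [Set.mem_setOf_eq, show j + t₀ - j = t₀ by omega]
    exact ht₀exact
  set m := j / σ with hm
  have hmod : m * σ + j % σ = j := by
    rw [hm, Nat.mul_comm]; exact Nat.div_add_mod j σ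
  have hmodlt : j % σ < σ := Nat.mod_lt j (by omega)
  have hjlt : j < (m + 1) * σ := by
    have : (m + 1) * σ = m * σ + σ := by ring
    omega
  have hjle : j ≤ m * σ + σ + s := by
    have : (m + 1) * σ = m * σ + σ := by ring
    omega
  -- the bound position has at least s letters in the prefix
  have hbound : m * σ + σ + s - j ∈ T := by
    by_cases hcase : k * σ ≤ m * σ + σ + s
    · -- the prefix is the whole remaining word
      have hdlen : d.length = w.length - j := by rw [hd, List.length_drop]
      have : d.length ≤ m * σ + σ + s - j := by omega
      rw [hT, Set.mem_setOf_eq, List.take_of_length_le this]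
      exact hcard
    · -- use the rainbow block number m+1
      push_neg at hcase
      have hm1k : m + 1 < k := by
        by_contra hc
        push_neg at hc
        have : k * σ ≤ (m + 1) * σ := Nat.mul_le_mul_right σ hc
        have h2 : (m + 1) * σ = m * σ + σ := by ring
        omega
      have hB := my_blocks hσ1 k w hK hlen (m + 1) hm1k
      set B := (w.drop ((m + 1) * σ)).take σ with hB2
      have hBlen : B.length = σ := by
        rw [hB2, List.length_take, List.length_drop]
        have : (m + 2) * σ ≤ k * σ := Nat.mul_le_mul_right σ (by omega)
        have h2 : (m + 2) * σ = (m + 1) * σ + σ := by ring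
        omega
      have hBnodup : B.Nodup := by
        rw [← List.dedup_eq_self]
        apply (List.dedup_sublist B).eq_of_length
        have : B.toFinset.card = σ := by rw [hB]; simp [Finset.card_univ]; exact hσdef.symm
        rw [List.card_toFinset] at this
        omega
      have hCnodup : (B.take s).Nodup := (List.take_sublist s B).nodup hBnodup
      have hClen : (B.take s).length = s := by
        rw [List.length_take]; omega
      have hCcard : (B.take s).toFinset.card = s := by
        rw [List.toFinset_card_of_nodup hCnodup, hClen]
      -- B.take s sits inside d.take (bound - j)
      have h2 : (m + 1) * σ = m * σ + σ := by ring
      have hc : j + ((m + 1) * σ - j) = (m + 1) * σ := by omega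
      have hXc : m * σ + σ + s - j - ((m + 1) * σ - j) = s := by omega
      have hmin : s ⊓ σ = s := min_eq_left hs2
      have hdecomp : B.take s = (d.take (m * σ + σ + s - j)).drop ((m + 1) * σ - j) := by
        rw [hB2, List.take_take, hmin, hd, List.drop_take, List.drop_drop, hc, hXc]
      have hsubset : (B.take s).toFinset ⊆ (d.take (m * σ + σ + s - j)).toFinset := by
        intro a ha
        rw [List.mem_toFinset] at ha ⊢
        rw [hdecomp] at ha
        exact List.drop_subset _ _ ha
      have := Finset.card_le_card hsubset
      rw [hT, Set.mem_setOf_eq]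
      omega
  have ht₀le : t₀ ≤ m * σ + σ + s - j := Nat.sInf_le hbound
  omega
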